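/- For all nonnegative integers m and n, the scalar product ⟨z^m, z^n⟩ := ∫_{ℝ³} conj(z)^m z^n dμ(z), where z ranges over pure quaternions identified with ℝ³ and μ is the standard Gaussian measure, equals (-1)^{(n-m)/2} (m+n+1)!! if n - m is even, and 0 if n - m is odd. -/

import Mathlib

open MeasureTheory Real Quaternion
open Set Metric

noncomputable def pureQ (x : Fin 3 → ℝ) : ℍ[ℝ] := ⟨0, x 0, x 1, x 2⟩

noncomputable def gaussDens (x : Fin 3 → ℝ) : ℝ :=
  (2 * π) ^ (-(3 : ℝ) / 2) * Real.exp (-(x 0 ^ 2 + x 1 ^ 2 + x 2 ^ 2) / 2)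

/-- Scalar product of the monomials `z^m` and `z^n` over pure quaternions with
respect to the standard Gaussian measure on `ℝ³`. -/
noncomputable def monomialSP (m n : ℕ) : ℍ[ℝ] :=
  ∫ x : Fin 3 → ℝ, gaussDens x • (star (pureQ x) ^ m * pureQ x ^ n)

lemma pureQ_re (x : Fin 3 → ℝ) : (pureQ x).re = 0 := rfl
lemma pureQ_imI (x : Fin 3 → ℝ) : (pureQ x).imI = x 0 := rfl
lemma pureQ_imJ (x : Fin 3 → ℝ) : (pureQ x).imJ = x 1 := rfl
lemma pureQ_imK (x : Fin 3 → ℝ) : (pureQ x).imK = x 2 := rfl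

lemma pureQ_star (x : Fin 3 → ℝ) : star (pureQ x) = - pureQ x := by
  ext <;> simp [pureQ_re, pureQ_imI, pureQ_imJ, pureQ_imK]

lemma pureQ_neg (x : Fin 3 → ℝ) : pureQ (-x) = - pureQ x := by
  ext <;> simp [pureQ_re, pureQ_imI, pureQ_imJ, pureQ_imK]

lemma pureQ_sq (x : Fin 3 → ℝ) :
    pureQ x ^ 2 = algebraMap ℝ ℍ[ℝ] (-(x 0 ^ 2 + x 1 ^ 2 + x 2 ^ 2)) := by
  ext <;> simp [pureQ_re, pureQ_imI, pureQ_imJ, pureQ_imK, pow_two, sq] <;> ring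

lemma gamma_half (s : ℕ) :
    Real.Gamma ((2 * s + 1 : ℝ) / 2 + 1) =
      (Nat.doubleFactorial (2 * s + 1) : ℝ) * Real.sqrt π / 2 ^ (s + 1) := by
  induction s with
  | zero =>
    rw [show ((2 * (0:ℕ) + 1 : ℝ)) / 2 + 1 = 1/2 + 1 by norm_num,
      Real.Gamma_add_one (by norm_num), Real.Gamma_one_half_eq]
    norm_num [Nat.doubleFactorial]
    ring
  | succ k ih =>
    have h : ((2 * (k+1 : ℕ) + 1 : ℝ)) / 2 + 1 = ((2 * k + 1 : ℝ) / 2 + 1) + 1 := by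
      push_cast; ring
    have hne : ((2 * k + 1 : ℝ) / 2 + 1) ≠ 0 := by positivity
    rw [h, Real.Gamma_add_one hne, ih,
      show 2 * (k+1) + 1 = (2 * k + 1) + 2 by ring, Nat.doubleFactorial_add_two]
    push_cast
    field_simp
    ring

lemma moment (s : ℕ) :
    ∫ x : Fin 3 → ℝ, gaussDens x * (x 0 ^ 2 + x 1 ^ 2 + x 2 ^ 2) ^ s
      = (Nat.doubleFactorial (2 * s + 1) : ℝ) := by
  have hme := (EuclideanSpace.volume_preserving_symm_measurableEquiv_toLp (Fin 3)).integral_comp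
      (MeasurableEquiv.toLp 2 (Fin 3 → ℝ)).symm.measurableEmbedding
      (fun x : Fin 3 → ℝ => gaussDens x * (x 0 ^ 2 + x 1 ^ 2 + x 2 ^ 2) ^ s)
  rw [← hme]
  set F : ℝ → ℝ := fun r => (2 * π) ^ (-(3:ℝ)/2) * Real.exp (-(r ^ 2) / 2) * r ^ (2 * s) with hF
  have key : ∀ y : EuclideanSpace ℝ (Fin 3),
      gaussDens ((MeasurableEquiv.toLp 2 (Fin 3 → ℝ)).symm y)
        * (((MeasurableEquiv.toLp 2 (Fin 3 → ℝ)).symm y) 0 ^ 2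
          + ((MeasurableEquiv.toLp 2 (Fin 3 → ℝ)).symm y) 1 ^ 2
          + ((MeasurableEquiv.toLp 2 (Fin 3 → ℝ)).symm y) 2 ^ 2) ^ s = F ‖y‖ := by
    intro y
    have hy : ((MeasurableEquiv.toLp 2 (Fin 3 → ℝ)).symm y : Fin 3 → ℝ) = fun i => y i := rfl
    have hnorm : ‖y‖ ^ 2 = y 0 ^ 2 + y 1 ^ 2 + y 2 ^ 2 := by
      rw [EuclideanSpace.norm_eq, sq_sqrt (by positivity)]
      simp [Fin.sum_univ_three]
    simp only [hy, hF, gaussDens]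
    rw [← hnorm, pow_mul]
  rw [show (fun y : EuclideanSpace ℝ (Fin 3) =>
      gaussDens ((MeasurableEquiv.toLp 2 (Fin 3 → ℝ)).symm y)
        * (((MeasurableEquiv.toLp 2 (Fin 3 → ℝ)).symm y) 0 ^ 2
          + ((MeasurableEquiv.toLp 2 (Fin 3 → ℝ)).symm y) 1 ^ 2
          + ((MeasurableEquiv.toLp 2 (Fin 3 → ℝ)).symm y) 2 ^ 2) ^ s)
      = fun y => F ‖y‖ from funext key]
  rw [MeasureTheory.integral_fun_norm_addHaar (volume : Measure (EuclideanSpace ℝ (Fin 3))) F]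
  rw [show Module.finrank ℝ (EuclideanSpace ℝ (Fin 3)) = 3 from finrank_euclideanSpace_fin]
  -- ball volume
  have hball : (volume (ball (0 : EuclideanSpace ℝ (Fin 3)) 1)).toReal
      = Real.sqrt π ^ 3 / (3 * Real.sqrt π / 2 ^ 2) := by
    rw [EuclideanSpace.volume_ball]
    have hcard : (Fintype.card (Fin 3)) = 3 := by simp
    rw [hcard]
    have hΓ : Real.Gamma ((3:ℕ) / 2 + 1) = 3 * Real.sqrt π / 2 ^ 2 := by
      have := gamma_half 1
      rw [show ((2 * (1:ℕ) + 1 : ℝ)) / 2 + 1 = ((3:ℕ):ℝ) / 2 + 1 by norm_num] at this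
      rw [this]
      norm_num [Nat.doubleFactorial]
    rw [hΓ]
    rw [ENNReal.ofReal_one, one_pow, one_mul, ENNReal.toReal_ofReal (by positivity)]
  rw [measureReal_def, hball]
  -- radial integral
  have h1 : Set.EqOn (fun y : ℝ => y ^ (3 - 1) • F y)
      (fun y : ℝ => (2 * π) ^ (-(3:ℝ)/2)
        * (y ^ (((2*s+2:ℕ)):ℝ) * Real.exp (-(1/2 : ℝ) * y ^ (2:ℝ)))) (Set.Ioi 0) := by
    intro y hy
    have hy0 : (0:ℝ) < y := hy
    simp only [hF, smul_eq_mul]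
    rw [Real.rpow_natCast, Real.rpow_two,
      show (-(1/2 : ℝ) * y ^ 2) = -(y ^ 2)/2 by ring]
    ring
  rw [setIntegral_congr_fun measurableSet_Ioi h1, integral_const_mul,
    integral_rpow_mul_exp_neg_mul_rpow (by norm_num) (by have h : (0:ℝ) ≤ ((2*s+2:ℕ):ℝ) := Nat.cast_nonneg _; linarith) (by norm_num : (0:ℝ) < 1/2)]
  -- Gamma value
  have hq : ((((2*s+2:ℕ)):ℝ) + 1) / 2 = (2 * s + 1 : ℝ) / 2 + 1 := by push_cast; ring
  rw [hq, gamma_half s]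
  rw [nsmul_eq_mul, smul_eq_mul]
  have ha : (0:ℝ) < Real.sqrt π := Real.sqrt_pos.mpr pi_pos
  have hsplit : (2*π) ^ (-(3:ℝ)/2) = (2:ℝ) ^ (-(3:ℝ)/2) * π ^ (-(3:ℝ)/2) :=
    Real.mul_rpow (by norm_num) pi_pos.le
  have hpi : π ^ (-(3:ℝ)/2) = (Real.sqrt π ^ 3)⁻¹ := by
    rw [neg_div, Real.rpow_neg pi_pos.le]
    congr 1
    rw [show (3:ℝ)/2 = (1/2) * ((3:ℕ):ℝ) by norm_num, Real.rpow_mul pi_pos.le,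
      Real.rpow_natCast, ← Real.sqrt_eq_rpow]
  have hhalf : ((1/2:ℝ)) ^ (-((((2*s+2:ℕ)):ℝ) + 1) / 2) = 2 ^ (s:ℝ) * 2 ^ ((3:ℝ)/2) := by
    rw [one_div, Real.inv_rpow (by norm_num : (0:ℝ) ≤ 2), ← Real.rpow_neg (by norm_num : (0:ℝ) ≤ 2),
      ← Real.rpow_add (by norm_num : (0:ℝ) < 2)]
    congr 1
    push_cast
    ring
  have hbinv : (2:ℝ) ^ (-(3:ℝ)/2) = ((2:ℝ) ^ ((3:ℝ)/2))⁻¹ := by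
    rw [neg_div, Real.rpow_neg (by norm_num : (0:ℝ) ≤ 2)]
  rw [hsplit, hpi, hhalf, hbinv, Real.rpow_natCast]
  have hc : (0:ℝ) < (2:ℝ) ^ ((3:ℝ)/2) := Real.rpow_pos_of_pos two_pos _
  field_simp
  ring


theorem stmt3 (m n : ℕ) :
    (∀ r : ℤ, (n : ℤ) - m = 2 * r →
      monomialSP m n =
        algebraMap ℝ ℍ[ℝ] ((-1 : ℝ) ^ r * (Nat.doubleFactorial (m + n + 1) : ℝ))) ∧
    (Odd ((n : ℤ) - m) → monomialSP m n = 0) := by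
  constructor
  · intro r hr
    obtain ⟨s, hs⟩ : ∃ s, m + n = 2 * s := ⟨(m + n) / 2, by omega⟩
    have hint : ∀ x : Fin 3 → ℝ,
        gaussDens x • (star (pureQ x) ^ m * pureQ x ^ n)
          = algebraMap ℝ ℍ[ℝ]
              ((-1 : ℝ) ^ (m + s) * (gaussDens x * (x 0 ^ 2 + x 1 ^ 2 + x 2 ^ 2) ^ s)) := by
      intro x
      have e0 : star (pureQ x) ^ m * pureQ x ^ n
          = algebraMap ℝ ℍ[ℝ] ((-1 : ℝ) ^ (m + s) * (x 0 ^ 2 + x 1 ^ 2 + x 2 ^ 2) ^ s) := by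
        have e1 : (-(pureQ x)) ^ m = algebraMap ℝ ℍ[ℝ] ((-1 : ℝ) ^ m) * pureQ x ^ m := by
          rw [neg_pow, map_pow, map_neg, map_one]
        rw [pureQ_star, e1, mul_assoc, ← pow_add, hs, pow_mul, pureQ_sq, ← map_pow, ← map_mul]
        congr 1
        rw [neg_pow (x 0 ^ 2 + x 1 ^ 2 + x 2 ^ 2)]
        ring
      rw [e0, Algebra.smul_def, ← map_mul]
      congr 1
      ring
    rw [monomialSP]
    simp_rw [hint, Algebra.algebraMap_eq_smul_one (R := ℝ) (A := ℍ[ℝ])]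
    have hr' : r = (s : ℤ) - m := by omega
    have hinv : ((-1 : ℝ) ^ m)⁻¹ = (-1 : ℝ) ^ m := by
      rw [← inv_pow]; norm_num
    have hsc : (-1 : ℝ) ^ r * (Nat.doubleFactorial (m + n + 1) : ℝ)
        = (-1 : ℝ) ^ (m + s) * (Nat.doubleFactorial (2 * s + 1) : ℝ) := by
      rw [hr', zpow_sub₀ (by norm_num : (-1 : ℝ) ≠ 0), zpow_natCast, zpow_natCast,
        div_eq_mul_inv, hinv, show m + n + 1 = 2 * s + 1 by omega, pow_add]
      ring
    rw [integral_smul_const, integral_const_mul, moment s, ← hsc]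
  · intro hodd
    have hmn : Odd (m + n) := by
      rw [Nat.odd_iff]
      obtain ⟨k, hk⟩ := hodd
      omega
    have hfneg : ∀ x : Fin 3 → ℝ,
        gaussDens (-x) • (star (pureQ (-x)) ^ m * pureQ (-x) ^ n)
          = - (gaussDens x • (star (pureQ x) ^ m * pureQ x ^ n)) := by
      intro x
      have hg : gaussDens (-x) = gaussDens x := by simp [gaussDens]
      rw [hg, pureQ_neg x, ← smul_neg]
      congr 1
      rcases Nat.even_or_odd m with hm | hm
      · have hn : Odd n := by
          rw [Nat.odd_iff] at hmn ⊢; rw [Nat.even_iff] at hm; omega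
        rw [star_neg, hm.neg_pow, hn.neg_pow, mul_neg]
      · have hn : Even n := by
          rw [Nat.odd_iff] at hmn hm; rw [Nat.even_iff]; omega
        rw [star_neg, hm.neg_pow, hn.neg_pow, neg_mul]
    have hsym := MeasureTheory.integral_neg_eq_self
        (fun x : Fin 3 → ℝ => gaussDens x • (star (pureQ x) ^ m * pureQ x ^ n)) volume
    rw [show (fun x : Fin 3 → ℝ => gaussDens (-x) • (star (pureQ (-x)) ^ m * pureQ (-x) ^ n))
        = fun x => - (gaussDens x • (star (pureQ x) ^ m * pureQ x ^ n)) from funext hfneg,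
      integral_neg] at hsym
    have h2 : (2 : ℝ) • monomialSP m n = 0 := by
      rw [two_smul, monomialSP]
      nth_rewrite 1 [← hsym]
      rw [neg_add_cancel]
    rcases smul_eq_zero.mp h2 with h | h
    · norm_num at h
    · exact h
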